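/- For all integers b ≥ 3 and w ≥ 1, one has k(b,w) ≤ b^w. -/

import Mathlib

open Finset

section Structural

abbrev MP (b w : ℕ) := {f : Fin b → Σ n : ℕ, n.Partition // (∑ i, (f i).1) = w}

lemma MP.le_w {b w : ℕ} (f : MP b w) (i : Fin b) : (f.1 i).1 ≤ w := by
  calc (f.1 i).1 ≤ ∑ i, (f.1 i).1 :=
        Finset.single_le_sum (f := fun i => (f.1 i).1) (fun _ _ => Nat.zero_le _) (mem_univ i)
    _ = w := f.2

instance MP.finite (b w : ℕ) : Finite (MP b w) := by
  let Φ : MP b w → (Fin b → Σ j : Fin (w+1), Nat.Partition ↑j) :=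
    fun f i => ⟨⟨(f.1 i).1, Nat.lt_succ_of_le (f.le_w i)⟩, (f.1 i).2⟩
  have hinj : Function.Injective Φ := by
    have hleft : ∀ f : MP b w,
        (fun i => (⟨↑((Φ f i).1), (Φ f i).2⟩ : Σ n : ℕ, n.Partition)) = f.1 := by
      intro f
      funext i
      exact Sigma.eta _
    intro f g h
    apply Subtype.ext
    rw [← hleft f, ← hleft g, h]
  exact Finite.of_injective Φ hinj

end Structural

/-- `multipartitions b w` is the number of `b`-multipartitions of `w`, i.e. the
number of `b`-tuples `(λ₁, …, λ_b)` of integer partitions with `|λ₁| + ⋯ + |λ_b| = w`. -/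
noncomputable def multipartitions (b w : ℕ) : ℕ :=
  Nat.card {f : Fin b → Σ n : ℕ, n.Partition // (∑ i, (f i).1) = w}

lemma multipartitions_rec (b w : ℕ) :
    multipartitions (b+1) w ≤
      ∑ j ∈ range (w+1), Nat.card (Nat.Partition j) * multipartitions b (w - j) := by
  have key : multipartitions (b+1) w ≤
      Nat.card (Σ j : Fin (w+1), Nat.Partition ↑j × MP b (w - ↑j)) := by
    let Φ : MP (b+1) w → Σ j : Fin (w+1), Nat.Partition ↑j × MP b (w - ↑j) :=
      fun f => ⟨⟨(f.1 0).1, Nat.lt_succ_of_le (f.le_w 0)⟩, (f.1 0).2,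
        ⟨fun i => f.1 i.succ, by
          show (∑ i : Fin b, (f.1 i.succ).1) = w - (f.1 0).1
          have h2 := f.2
          rw [Fin.sum_univ_succ] at h2
          omega⟩⟩
    have hinj : Function.Injective Φ := by
      let Ψ : (Σ j : Fin (w+1), Nat.Partition ↑j × MP b (w - ↑j)) →
          (Fin (b+1) → Σ n : ℕ, n.Partition) :=
        fun x => Fin.cons ⟨↑x.1, x.2.1⟩ (x.2.2.1)
      have hleft : ∀ f : MP (b+1) w, Ψ (Φ f) = f.1 := by
        intro f
        funext i
        induction i using Fin.cases with
        | zero => exact Sigma.eta _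
        | succ i => rfl
      intro f g h
      apply Subtype.ext
      rw [← hleft f, ← hleft g, h]
    exact Nat.card_le_card_of_injective Φ hinj
  refine key.trans ?_
  letI : ∀ j : Fin (w+1), Fintype (Nat.Partition ↑j × MP b (w - ↑j)) :=
    fun j => Fintype.ofFinite _
  rw [Nat.card_eq_fintype_card, Fintype.card_sigma]
  rw [← Fin.sum_univ_eq_sum_range
    (fun j => Nat.card (Nat.Partition j) * multipartitions b (w - j)) (w+1)]
  apply le_of_eq
  refine Finset.sum_congr rfl (fun j _ => ?_)
  rw [← Nat.card_eq_fintype_card, Nat.card_prod]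
  rfl

lemma partition_card_le (n : ℕ) : Nat.card (Nat.Partition n) ≤ 2 ^ (n - 1) := by
  rw [Nat.card_eq_fintype_card, ← composition_card n]
  apply Fintype.card_le_of_injective
    (fun p => ⟨p.parts.sort (· ≤ ·),
      fun {i} hi => p.parts_pos ((Multiset.mem_sort (· ≤ ·)).mp hi),
      by rw [← Multiset.sum_coe, Multiset.sort_eq]; exact p.parts_sum⟩)
  intro p q h
  ext1
  have : (Multiset.sort p.parts (· ≤ ·)) = (Multiset.sort q.parts (· ≤ ·)) :=
    congrArg Composition.blocks h
  rw [← Multiset.sort_eq p.parts (· ≤ ·), ← Multiset.sort_eq q.parts (· ≤ ·), this]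

lemma mp_zero_le (b : ℕ) : multipartitions b 0 ≤ 1 := by
  rw [show multipartitions b 0 = Nat.card (MP b 0) from rfl]
  rw [Finite.card_le_one_iff_subsingleton]
  constructor
  intro f g
  apply Subtype.ext
  funext i
  have hf : (f.1 i).1 = 0 := Nat.le_zero.mp (f.le_w i)
  have hg : (g.1 i).1 = 0 := Nat.le_zero.mp (g.le_w i)
  have : ∀ x : Σ n : ℕ, n.Partition, x.1 = 0 → x = ⟨0, default⟩ := by
    rintro ⟨a, p⟩ h
    dsimp at h
    subst h
    exact congrArg _ (Subsingleton.elim _ _)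
  rw [this _ hf, this _ hg]

lemma mp_b0 (w : ℕ) (hw : w ≠ 0) : multipartitions 0 w = 0 := by
  rw [show multipartitions 0 w = Nat.card (MP 0 w) from rfl]
  have : IsEmpty (MP 0 w) := by
    constructor
    intro f
    have := f.2
    simp at this
    exact hw this.symm
  exact Nat.card_of_isEmpty

/-- convolution helpers -/
def qq (n : ℕ) : ℕ := 2 ^ (n - 1)

def EE (w : ℕ) : ℕ := ∑ j ∈ range (w+1), qq j * 2 ^ (w - j)
def CC2 (w : ℕ) : ℕ := ∑ j ∈ range (w+1), qq j * qq (w - j)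
def CC3 (w : ℕ) : ℕ := ∑ j ∈ range (w+1), qq j * CC2 (w - j)

lemma qq_succ (n : ℕ) : qq (n+1) = 2 ^ n := by simp [qq]

lemma EE_succ (w : ℕ) : EE (w+1) = 2 * EE w + 2 ^ w := by
  rw [EE, Finset.sum_range_succ, qq_succ]
  rw [EE, Finset.mul_sum]
  have h : ∀ j ∈ range (w+1), qq j * 2 ^ (w+1-j) = 2 * (qq j * 2 ^ (w-j)) := by
    intro j hj
    rw [mem_range] at hj
    have : w + 1 - j = (w - j) + 1 := by omega
    rw [this, pow_succ]
    ring
  rw [Finset.sum_congr rfl h]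
  simp

lemma EE_eq (w : ℕ) : 2 * EE w = (w + 2) * 2 ^ w := by
  induction w with
  | zero => simp [EE, qq]
  | succ w ih =>
    rw [EE_succ]
    calc 2 * (2 * EE w + 2 ^ w) = 2 * (2 * EE w) + 2 * 2 ^ w := by ring
      _ = 2 * ((w+2) * 2 ^ w) + 2 * 2 ^ w := by rw [ih]
      _ = (w + 1 + 2) * 2 ^ (w+1) := by ring

lemma CC2_succ (w : ℕ) : CC2 (w+1) = 2 ^ w + EE w := by
  rw [CC2, Finset.sum_range_succ, qq_succ]
  have h : ∀ j ∈ range (w+1), qq j * qq (w+1-j) = qq j * 2 ^ (w-j) := by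
    intro j hj
    rw [mem_range] at hj
    have : w + 1 - j = (w - j) + 1 := by omega
    rw [this, qq_succ]
  rw [Finset.sum_congr rfl h]
  simp [EE, qq]
  ring

lemma CC2_eq (w : ℕ) : 4 * CC2 (w+1) = (w + 4) * 2 ^ (w+1) := by
  rw [CC2_succ]
  calc 4 * (2 ^ w + EE w) = 4 * 2 ^ w + 2 * (2 * EE w) := by ring
    _ = 4 * 2 ^ w + 2 * ((w+2) * 2 ^ w) := by rw [EE_eq]
    _ = (w + 4) * 2 ^ (w+1) := by ring

lemma CC3_split (w : ℕ) : CC3 (w+1) = (∑ j ∈ range (w+1), qq j * CC2 (w+1-j)) + 2 ^ w := by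
  rw [CC3, Finset.sum_range_succ, qq_succ]
  simp [CC2, qq]

lemma CC2_rec (v : ℕ) : CC2 (v+2) = 2 * CC2 (v+1) + 2 ^ v := by
  have h1 := CC2_eq (v+1)
  have h2 := CC2_eq v
  apply Nat.eq_of_mul_eq_mul_left (show 0 < 4 by norm_num)
  calc 4 * CC2 (v+2) = (v+1+4) * 2 ^ (v+1+1) := h1
    _ = 2 * ((v+4) * 2 ^ (v+1)) + 4 * 2 ^ v := by ring
    _ = 2 * (4 * CC2 (v+1)) + 4 * 2 ^ v := by rw [h2]
    _ = 4 * (2 * CC2 (v+1) + 2 ^ v) := by ring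

lemma CC3_rec (w : ℕ) : CC3 (w+2) = 2 * CC3 (w+1) + 2 ^ (w+1) + EE w := by
  have hc1 : CC2 1 = 2 := by simp [CC2, Finset.sum_range_succ, qq]
  have hA := CC3_split (w+1)
  simp only [show w+1+1 = w+2 from by omega] at hA
  rw [Finset.sum_range_succ] at hA
  have hterm : qq (w+1) * CC2 (w + 2 - (w+1)) = 2 ^ w * 2 := by
    have h : w + 2 - (w+1) = 1 := by omega
    rw [h, qq_succ, hc1]
  rw [hterm] at hA
  have hs : (∑ j ∈ range (w+1), qq j * CC2 (w+2-j))
      = 2 * (∑ j ∈ range (w+1), qq j * CC2 (w+1-j)) + EE w := by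
    rw [Finset.mul_sum, EE, ← Finset.sum_add_distrib]
    refine Finset.sum_congr rfl (fun j hj => ?_)
    rw [mem_range] at hj
    have h1 : w + 2 - j = (w - j) + 2 := by omega
    have h2 : w + 1 - j = (w - j) + 1 := by omega
    rw [h1, h2, CC2_rec]
    ring
  rw [hs] at hA
  have hB := CC3_split w
  omega

lemma CC3_bound (w : ℕ) : 16 * CC3 (w+1) ≤ ((w+1)*(w+1) + 9*(w+1) + 14) * 2 ^ (w+1) := by
  induction w with
  | zero =>
    have : CC3 1 = 3 := by simp [CC3, CC2, Finset.sum_range_succ, qq]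
    rw [this]; norm_num
  | succ w ih =>
    rw [CC3_rec]
    have hE := EE_eq w
    have hgoal : ((w+2)*(w+2) + 9*(w+2) + 14) * 2 ^ (w+2)
        = 2 * (((w+1)*(w+1) + 9*(w+1) + 14) * 2 ^ (w+1)) + 16 * 2^(w+1) + 8 * ((w+2) * 2^w) := by
      ring
    calc 16 * (2 * CC3 (w+1) + 2 ^ (w+1) + EE w)
        = 2 * (16 * CC3 (w+1)) + 16 * 2 ^ (w+1) + 8 * (2 * EE w) := by ring
      _ ≤ 2 * (((w+1)*(w+1) + 9*(w+1) + 14) * 2 ^ (w+1)) + 16 * 2^(w+1) + 8 * ((w+2) * 2^w) := by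
          rw [hE]; omega
      _ = ((w+2)*(w+2) + 9*(w+2) + 14) * 2 ^ (w+2) := hgoal.symm

lemma poly_bound (w : ℕ) : ((w+1)*(w+1) + 9*(w+1) + 14) * 2 ^ (w+1) ≤ 16 * 3 ^ (w+1) := by
  induction w with
  | zero => norm_num
  | succ w ih =>
    have hcoef : 2 * ((w+2)*(w+2) + 9*(w+2) + 14) ≤ 3 * ((w+1)*(w+1) + 9*(w+1) + 14) := by
      nlinarith
    calc ((w+2)*(w+2) + 9*(w+2) + 14) * 2 ^ (w+2)
        = (2 * ((w+2)*(w+2) + 9*(w+2) + 14)) * 2 ^ (w+1) := by ring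
      _ ≤ (3 * ((w+1)*(w+1) + 9*(w+1) + 14)) * 2 ^ (w+1) := Nat.mul_le_mul_right _ hcoef
      _ = 3 * (((w+1)*(w+1) + 9*(w+1) + 14) * 2 ^ (w+1)) := by ring
      _ ≤ 3 * (16 * 3 ^ (w+1)) := Nat.mul_le_mul_left _ ih
      _ = 16 * 3 ^ (w+2) := by ring

/-- geometric-type sum for the induction step -/
def UU (b w : ℕ) : ℕ := ∑ j ∈ range w, 2 ^ j * b ^ (w - 1 - j)

lemma UU_eq (c w : ℕ) : (c+1) * UU (c+3) w + 2 ^ w = (c+3) ^ w := by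
  induction w with
  | zero => simp [UU]
  | succ w ih =>
    have hU : UU (c+3) (w+1) = 2 ^ w + (c+3) * UU (c+3) w := by
      rw [UU, Finset.sum_range_succ]
      have h : ∀ j ∈ range w, 2 ^ j * (c+3) ^ (w + 1 - 1 - j) = (c+3) * (2 ^ j * (c+3) ^ (w-1-j)) := by
        intro j hj
        rw [mem_range] at hj
        have : w + 1 - 1 - j = (w - 1 - j) + 1 := by omega
        rw [this, pow_succ]
        ring
      rw [Finset.sum_congr rfl h, ← Finset.mul_sum, UU]
      simp
      ring
    rw [hU]
    calc (c+1) * (2 ^ w + (c+3) * UU (c+3) w) + 2 ^ (w+1)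
        = (c+3) * ((c+1) * UU (c+3) w + 2 ^ w) := by ring
      _ = (c+3) * (c+3) ^ w := by rw [ih]
      _ = (c+3) ^ (w+1) := by ring

lemma arith_step (c w : ℕ) : (c+2) * (c+3) ^ w ≤ (c+1) * (c+4) ^ w + 2 ^ w := by
  induction w with
  | zero => simp
  | succ w ih =>
    have h2 : 2 ^ w ≤ (c+4) ^ w := Nat.pow_le_pow_left (by omega) w
    calc (c+2) * (c+3) ^ (w+1) = (c+3) * ((c+2) * (c+3)^w) := by ring
      _ ≤ (c+3) * ((c+1) * (c+4) ^ w + 2 ^ w) := Nat.mul_le_mul_left _ ih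
      _ = (c+1) * ((c+3) * (c+4)^w + 2^w) + 2 * 2^w := by ring
      _ ≤ (c+1) * ((c+3) * (c+4)^w + (c+4)^w) + 2 * 2^w :=
          Nat.add_le_add_right (Nat.mul_le_mul_left _ (Nat.add_le_add_left h2 _)) _
      _ = (c+1) * (c+4)^(w+1) + 2^(w+1) := by ring

lemma hM1 (v : ℕ) : multipartitions 1 v ≤ qq v := by
  have h := multipartitions_rec 0 v
  rw [Finset.sum_range_succ] at h
  have hz : (∑ j ∈ range v, Nat.card (Nat.Partition j) * multipartitions 0 (v - j)) = 0 := by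
    refine Finset.sum_eq_zero (fun j hj => ?_)
    rw [mem_range] at hj
    rw [mp_b0 _ (by omega)]
    ring
  rw [hz] at h
  simp only [Nat.sub_self, zero_add] at h
  calc multipartitions 1 v ≤ Nat.card (Nat.Partition v) * multipartitions 0 0 := h
    _ ≤ 2 ^ (v-1) * 1 := Nat.mul_le_mul (partition_card_le v) (mp_zero_le 0)
    _ = qq v := by rw [qq]; ring

lemma hM2 (w : ℕ) : multipartitions 2 w ≤ CC2 w := by
  refine (multipartitions_rec 1 w).trans ?_
  refine Finset.sum_le_sum (fun j hj => ?_)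
  exact Nat.mul_le_mul (partition_card_le j) (hM1 (w - j))

lemma hM3 (w : ℕ) : multipartitions 3 w ≤ CC3 w := by
  refine (multipartitions_rec 2 w).trans ?_
  refine Finset.sum_le_sum (fun j hj => ?_)
  exact Nat.mul_le_mul (partition_card_le j) (hM2 (w - j))

lemma H3 (w : ℕ) : multipartitions 3 w ≤ 3 ^ w := by
  cases w with
  | zero => simpa using mp_zero_le 3
  | succ w =>
    refine Nat.le_of_mul_le_mul_left ?_ (show 0 < 16 by norm_num)
    calc 16 * multipartitions 3 (w+1) ≤ 16 * CC3 (w+1) :=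
          Nat.mul_le_mul_left _ (hM3 (w+1))
      _ ≤ ((w+1)*(w+1) + 9*(w+1) + 14) * 2 ^ (w+1) := CC3_bound w
      _ ≤ 16 * 3 ^ (w+1) := poly_bound w

lemma step (c : ℕ) (IH : ∀ v, multipartitions (c+3) v ≤ (c+3) ^ v) (w : ℕ) :
    multipartitions (c+4) w ≤ (c+4) ^ w := by
  have hrec := multipartitions_rec (c+3) w
  rw [show c+3+1 = c+4 from by omega] at hrec
  rw [Finset.sum_range_succ'] at hrec
  have h1 : (∑ j ∈ range w, Nat.card (Nat.Partition (j+1)) * multipartitions (c+3) (w - (j+1)))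
      ≤ UU (c+3) w := by
    refine Finset.sum_le_sum (fun j hj => ?_)
    have e1 : w - (j+1) = w - 1 - j := by omega
    have e2 : Nat.card (Nat.Partition (j+1)) ≤ 2 ^ j := partition_card_le (j+1)
    rw [e1]
    exact Nat.mul_le_mul e2 (IH _)
  have h2 : Nat.card (Nat.Partition 0) * multipartitions (c+3) (w - 0) ≤ (c+3) ^ w := by
    have := partition_card_le 0
    simp only [Nat.zero_sub, pow_zero] at this
    calc Nat.card (Nat.Partition 0) * multipartitions (c+3) (w - 0)
        ≤ 1 * (c+3) ^ w := Nat.mul_le_mul this (by simpa using IH w)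
      _ = (c+3) ^ w := one_mul _
  have hmain : multipartitions (c+4) w ≤ UU (c+3) w + (c+3) ^ w :=
    hrec.trans (Nat.add_le_add h1 h2)
  refine hmain.trans ?_
  -- (c+1) * (UU + (c+3)^w) + 2^w = (c+2) * (c+3)^w ≤ (c+1)*(c+4)^w + 2^w
  have key : (c+1) * (UU (c+3) w + (c+3) ^ w) + 2 ^ w = (c+2) * (c+3) ^ w := by
    calc (c+1) * (UU (c+3) w + (c+3) ^ w) + 2 ^ w
        = ((c+1) * UU (c+3) w + 2 ^ w) + (c+1) * (c+3) ^ w := by ring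
      _ = (c+3) ^ w + (c+1) * (c+3) ^ w := by rw [UU_eq]
      _ = (c+2) * (c+3) ^ w := by ring
  have h3 : (c+1) * (UU (c+3) w + (c+3) ^ w) + 2 ^ w ≤ (c+1) * (c+4) ^ w + 2 ^ w := by
    rw [key]
    exact arith_step c w
  have h4 : (c+1) * (UU (c+3) w + (c+3) ^ w) ≤ (c+1) * (c+4) ^ w := by omega
  exact Nat.le_of_mul_le_mul_left h4 (by omega)

lemma main_aux (n : ℕ) : ∀ w, multipartitions (3+n) w ≤ (3+n) ^ w := by
  induction n with
  | zero => simpa using H3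
  | succ n ih =>
    have := step n (by simpa [show n+3 = 3+n from by omega] using ih)
    simpa [show n+4 = 3+(n+1) from by omega] using this

theorem multipartitions_le_pow (b w : ℕ) (hb : 3 ≤ b) (hw : 1 ≤ w) :
    multipartitions b w ≤ b ^ w := by
  obtain ⟨n, rfl⟩ := Nat.exists_eq_add_of_le hb
  exact main_aux n w
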